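/- The second derivative of E(α) = (α(1−α)/(1−2α))·log₂(α⁻¹−1) at any α ∈ (0,1) with α ≠ 1/2 equals −((t+1)³/(t(1−t)³ ln 2))·(1 + 2t ln t − t²) where t = α/(1−α), and in particular is nonpositive. -/

import Mathlib

open Real

noncomputable def F1 (x : ℝ) : ℝ :=
  ((1 - 2*x + 2*x^2)/(1 - 2*x)^2 * log ((1-x)/x) - 1/(1-2*x)) / log 2

noncomputable def F2 (x : ℝ) : ℝ :=
  (2 * log ((1-x)/x) / (1-2*x)^3 - 1/(x*(1-x)*(1-2*x)^2)) / log 2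

lemma hasDerivAt_F {x : ℝ} (hx0 : 0 < x) (hx1 : x < 1) (hx2 : x ≠ 1/2) :
    HasDerivAt (fun α : ℝ => (α * (1 - α) / (1 - 2 * α)) * logb 2 (α⁻¹ - 1)) (F1 x) x := by
  have h2x : (1 : ℝ) - 2*x ≠ 0 := by intro h; apply hx2; linarith
  have hxne : x ≠ 0 := ne_of_gt hx0
  have h1x : (1:ℝ) - x ≠ 0 := by intro h; linarith
  have harg : x⁻¹ - 1 ≠ 0 := by
    have : (1:ℝ) < x⁻¹ := one_lt_inv₀ hx0 |>.mpr hx1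
    linarith
  have funeq : (fun α : ℝ => (α * (1 - α) / (1 - 2 * α)) * logb 2 (α⁻¹ - 1))
      = fun α : ℝ => (α * (1 - α) / (1 - 2 * α)) * (log (α⁻¹ - 1) / log 2) := by
    funext a; rw [Real.logb]
  rw [funeq]
  have hg : HasDerivAt (fun α : ℝ => α * (1 - α) / (1 - 2 * α))
      (((1 - 2*x) * (1 - 2*x) + 2 * (x * (1 - x))) / (1 - 2*x)^2) x := by
    have hnum : HasDerivAt (fun α : ℝ => α * (1 - α)) (1 * (1 - x) + x * (0 - 1)) x :=
      (hasDerivAt_id x).mul ((hasDerivAt_const x 1).sub (hasDerivAt_id x))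
    have hden : HasDerivAt (fun α : ℝ => 1 - 2 * α) (0 - 2 * 1) x := by
      exact (hasDerivAt_const x 1).sub ((hasDerivAt_id x).const_mul 2)
    have := hnum.div hden h2x
    refine this.congr_deriv ?_
    ring
  have hinv : HasDerivAt (fun α : ℝ => α⁻¹ - 1) (-(x^2)⁻¹ - 0) x :=
    (hasDerivAt_inv hxne).sub (hasDerivAt_const x 1)
  have hL : HasDerivAt (fun α : ℝ => log (α⁻¹ - 1) / log 2)
      (((-(x^2)⁻¹ - 0) / (x⁻¹ - 1)) / log 2) x := (hinv.log harg).div_const (log 2)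
  have hmul := hg.mul hL
  refine hmul.congr_deriv ?_
  symm
  have hlogeq : log ((1-x)/x) = log (x⁻¹ - 1) := by
    congr 1; field_simp
  unfold F1
  have hl2 : log 2 ≠ 0 := ne_of_gt (Real.log_pos one_lt_two)
  rw [show x⁻¹ - 1 = (1-x)/x from by field_simp]
  field_simp
  ring

lemma hasDerivAt_F1 {x : ℝ} (hx0 : 0 < x) (hx1 : x < 1) (hx2 : x ≠ 1/2) :
    HasDerivAt F1 (F2 x) x := by
  have h2x : (1 : ℝ) - 2*x ≠ 0 := by intro h; apply hx2; linarith
  have hxne : x ≠ 0 := ne_of_gt hx0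
  have h1x : (1:ℝ) - x ≠ 0 := by intro h; linarith
  have hq : ((1:ℝ)-x)/x ≠ 0 := div_ne_zero h1x hxne
  have hl2 : log 2 ≠ 0 := ne_of_gt (Real.log_pos one_lt_two)
  have hden : ∀ y : ℝ, HasDerivAt (fun α : ℝ => 1 - 2 * α) (0 - 2 * 1) y := fun y => by
    exact (hasDerivAt_const y 1).sub ((hasDerivAt_id y).const_mul 2)
  have hu : HasDerivAt (fun α : ℝ => (1 - 2*α + 2*α^2)/(1 - 2*α)^2)
      (((0 - 2*1 + 2*(2*x)) * (1-2*x)^2 - (1 - 2*x + 2*x^2) * (2*(1-2*x)^1*(0-2*1))) / ((1-2*x)^2)^2) x := by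
    have hnum : HasDerivAt (fun α : ℝ => 1 - 2*α + 2*α^2) (0 - 2*1 + 2*(2*x)) x := by
      have : HasDerivAt (fun α : ℝ => α^2) (2*x) x := by
        simpa using hasDerivAt_pow 2 x
      exact (hden x).add (this.const_mul 2)
    have hd2 : HasDerivAt (fun α : ℝ => (1 - 2*α)^2) (2*(1-2*x)^1*(0-2*1)) x :=
      (hden x).pow 2
    exact hnum.div hd2 (pow_ne_zero 2 h2x)
  have hh : HasDerivAt (fun α : ℝ => log ((1-α)/α))
      ((((0-1)*x - (1-x)*1)/x^2) / ((1-x)/x)) x := by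
    have hq' : HasDerivAt (fun α : ℝ => (1-α)/α) (((0-1)*x - (1-x)*1)/x^2) x :=
      ((hasDerivAt_const x 1).sub (hasDerivAt_id x)).div (hasDerivAt_id x) hxne
    exact hq'.log hq
  have hv : HasDerivAt (fun α : ℝ => 1/(1-2*α)) ((0*(1-2*x) - 1*(0-2*1))/(1-2*x)^2) x :=
    (hasDerivAt_const x 1).div (hden x) h2x
  have : HasDerivAt F1 ((((0 - 2*1 + 2*(2*x)) * (1-2*x)^2 - (1 - 2*x + 2*x^2) * (2*(1-2*x)^1*(0-2*1))) / ((1-2*x)^2)^2 * log ((1-x)/x)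
      + (1 - 2*x + 2*x^2)/(1 - 2*x)^2 * ((((0-1)*x - (1-x)*1)/x^2) / ((1-x)/x))
      - (0*(1-2*x) - 1*(0-2*1))/(1-2*x)^2) / log 2) x :=
    ((hu.mul hh).sub hv).div_const (log 2)
  convert this using 1
  unfold F2
  field_simp
  ring

lemma key_ineq {s : ℝ} (hs : 1 ≤ s) : 2 * s * log s ≤ s^2 - 1 := by
  have hmono : MonotoneOn (fun s : ℝ => s^2 - 1 - 2*s*log s) (Set.Ici 1) := by
    have hderiv : ∀ y ∈ interior (Set.Ici (1:ℝ)),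
        0 ≤ deriv (fun s : ℝ => s^2 - 1 - 2*s*log s) y := by
      intro y hy
      rw [interior_Ici] at hy
      have hy1 : (1:ℝ) < y := hy
      have hyne : y ≠ 0 := by positivity
      have hd : HasDerivAt (fun s : ℝ => s^2 - 1 - 2*s*log s)
          ((2*y - 0) - (2*1*log y + 2*y*y⁻¹)) y := by
        have h1 : HasDerivAt (fun s : ℝ => s^2 - 1) (2*y - 0) y := by
          have : HasDerivAt (fun s : ℝ => s^2) (2*y) y := by simpa using hasDerivAt_pow 2 y
          exact this.sub (hasDerivAt_const y 1)
        have h2 : HasDerivAt (fun s : ℝ => 2*s*log s) (2*1*log y + 2*y*y⁻¹) y := by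
          have ha : HasDerivAt (fun s : ℝ => 2*s) (2*1) y := (hasDerivAt_id y).const_mul 2
          have hb : HasDerivAt log y⁻¹ y := Real.hasDerivAt_log hyne
          exact ha.mul hb
        exact h1.sub h2
      rw [hd.deriv]
      have hlog : log y ≤ y - 1 := Real.log_le_sub_one_of_pos (by positivity)
      have : y * y⁻¹ = 1 := mul_inv_cancel₀ hyne
      nlinarith
    apply monotoneOn_of_deriv_nonneg (convex_Ici 1) _ _ hderiv
    · apply ContinuousOn.sub
      · fun_prop
      · apply ContinuousOn.mul (by fun_prop)
        apply Real.continuousOn_log.mono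
        intro y hy
        simp only [Set.mem_Ici] at hy
        simp only [Set.mem_compl_iff, Set.mem_singleton_iff]
        intro h; rw [h] at hy; linarith
    · intro y hy
      rw [interior_Ici] at hy
      have hy1 : (1:ℝ) < y := hy
      have hyne : y ≠ 0 := by intro h; rw [h] at hy1; linarith
      apply DifferentiableAt.differentiableWithinAt
      apply DifferentiableAt.sub (by fun_prop)
      exact DifferentiableAt.mul (by fun_prop) (Real.differentiableAt_log hyne)
  have := hmono (Set.self_mem_Ici) (Set.mem_Ici.mpr hs) hs
  simp only [one_pow, Real.log_one] at this
  nlinarith [this]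

lemma F2_eq {x : ℝ} (hx0 : 0 < x) (hx1 : x < 1) (hx2 : x ≠ 1/2) :
    F2 x = -((x / (1 - x) + 1) ^ 3 / ((x / (1 - x)) * (1 - x / (1 - x)) ^ 3 * log 2)) *
        (1 + 2 * (x / (1 - x)) * log (x / (1 - x)) - (x / (1 - x)) ^ 2) := by
  have hxne : x ≠ 0 := ne_of_gt hx0
  have h1x : (1:ℝ) - x ≠ 0 := by intro h; linarith
  have h2x : (1 : ℝ) - 2*x ≠ 0 := by intro h; apply hx2; linarith
  have hl2 : log 2 ≠ 0 := ne_of_gt (Real.log_pos one_lt_two)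
  rw [show x/(1-x) + 1 = 1/(1-x) from by field_simp; ring,
      show (1:ℝ) - x/(1-x) = (1-2*x)/(1-x) from by field_simp; ring,
      show x/(1-x) = ((1-x)/x)⁻¹ from (inv_div _ _).symm, Real.log_inv]
  unfold F2
  field_simp
  ring

/-- The second derivative of `E(α) = (α(1−α)/(1−2α))·log₂(α⁻¹−1)` at `α ∈ (0,1)`, `α ≠ 1/2`,
equals `−((t+1)³/(t(1−t)³ ln 2))·(1 + 2t ln t − t²)` where `t = α/(1−α)`, and is nonpositive. -/
theorem second_deriv_expected_throughput {α : ℝ} (hα : α ∈ Set.Ioo (0 : ℝ) 1)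
    (hα2 : α ≠ 1 / 2) :
    deriv (deriv (fun α : ℝ => (α * (1 - α) / (1 - 2 * α)) * logb 2 (α⁻¹ - 1))) α =
      -((α / (1 - α) + 1) ^ 3 / ((α / (1 - α)) * (1 - α / (1 - α)) ^ 3 * log 2)) *
        (1 + 2 * (α / (1 - α)) * log (α / (1 - α)) - (α / (1 - α)) ^ 2) ∧
    deriv (deriv (fun α : ℝ => (α * (1 - α) / (1 - 2 * α)) * logb 2 (α⁻¹ - 1))) α ≤ 0 := by
  obtain ⟨hα0, hα1⟩ := hα
  -- the open set of good points
  have hS : (Set.Ioo (0:ℝ) 1 ∩ {(1/2 : ℝ)}ᶜ) ∈ nhds α :=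
    (isOpen_Ioo.inter isOpen_compl_singleton).mem_nhds ⟨⟨hα0, hα1⟩, hα2⟩
  have hev : (deriv (fun α : ℝ => (α * (1 - α) / (1 - 2 * α)) * logb 2 (α⁻¹ - 1)))
      =ᶠ[nhds α] F1 := by
    filter_upwards [hS] with x hx
    exact (hasDerivAt_F hx.1.1 hx.1.2 hx.2).deriv
  have hd2 : deriv (deriv (fun α : ℝ => (α * (1 - α) / (1 - 2 * α)) * logb 2 (α⁻¹ - 1))) α
      = F2 α := by
    rw [hev.deriv_eq]
    exact (hasDerivAt_F1 hα0 hα1 hα2).deriv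
  have heq := F2_eq hα0 hα1 hα2
  refine ⟨hd2.trans heq, ?_⟩
  rw [hd2, heq]
  -- sign analysis with t = α/(1-α)
  set t := α / (1 - α) with ht
  have h1α : (0:ℝ) < 1 - α := by linarith
  have ht0 : 0 < t := div_pos hα0 h1α
  have hl2 : (0:ℝ) < log 2 := Real.log_pos one_lt_two
  rcases lt_or_gt_of_ne (fun h => hα2 (by linarith) : α ≠ 1/2) with hlt | hgt
  · -- α < 1/2, so t < 1
    have ht1 : t < 1 := (div_lt_one h1α).mpr (by linarith)
    have hφ : 0 ≤ 1 + 2 * t * log t - t ^ 2 := by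
      have hs : (1:ℝ) ≤ 1/t := one_le_one_div ht0 (le_of_lt ht1)
      have := key_ineq hs
      rw [one_div, Real.log_inv] at this
      have htne : t ≠ 0 := ne_of_gt ht0
      have h1 : (t⁻¹)^2 = 1/t^2 := by field_simp
      rw [h1] at this
      have := mul_le_mul_of_nonneg_left this (le_of_lt (pow_pos ht0 2))
      have hinv : t^2 * (2 * t⁻¹ * -log t) = -2 * t * log t := by field_simp
      have hinv2 : t^2 * (1/t^2 - 1) = 1 - t^2 := by field_simp
      nlinarith
    have hC : 0 ≤ (t + 1) ^ 3 / (t * (1 - t) ^ 3 * log 2) := by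
      apply le_of_lt
      apply div_pos (by positivity)
      exact mul_pos (mul_pos ht0 (pow_pos (by linarith) 3)) hl2
    nlinarith [mul_nonneg hC hφ]
  · -- α > 1/2, so t > 1
    have ht1 : 1 < t := (one_lt_div h1α).mpr (by linarith)
    have hφ : 1 + 2 * t * log t - t ^ 2 ≤ 0 := by
      have := key_ineq (le_of_lt ht1)
      linarith
    have hC : (t + 1) ^ 3 / (t * (1 - t) ^ 3 * log 2) < 0 := by
      apply div_neg_of_pos_of_neg (by positivity)
      have h3 : (1 - t) ^ 3 < 0 := Odd.pow_neg ⟨1, by norm_num⟩ (by linarith)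
      have h5 : t * (1-t)^3 * log 2 = (t * log 2) * (1-t)^3 := by ring
      rw [h5]
      exact mul_neg_of_pos_of_neg (mul_pos ht0 hl2) h3
    nlinarith [mul_nonpos_of_nonneg_of_nonpos (le_of_lt (neg_pos.mpr hC)) hφ]
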